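/- Let n ≥ 2, let f = (f₁, …, f_n) be an environment on n lines, let Y ≥ 0, and let h₀ : [0,Y] → ℝ be bounded above. Define H(x) := sup_{0 ≤ y ≤ min(Y,x)} ( h₀(y) + f[(y,n)→(x,1)] ) for x ≥ 0. Then for every t ≥ 0 and s > 0: H(t + s) = max{ H(t) + f₁(t+s) − f₁(t) , sup_{t < u ≤ t+s} sup_{0 ≤ y ≤ min(Y,u)} ( h₀(y) + f[(y,n)→(u,2)] + f₁(t+s) − f₁(u) ) }. -/

import Mathlib

open Set

/-- Jump times of an upright path from `(y, n)` to `(x, 1)` in an `n`-line environment: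
`t 0 = x`, `t (Fin.last n) = y`, and the jump times are non-increasing. -/
def IsJumpTimes (n : ℕ) (y x : ℝ) (t : Fin (n + 1) → ℝ) : Prop :=
  t (Fin.last n) = y ∧ t 0 = x ∧ ∀ i : Fin n, t i.succ ≤ t i.castSucc

/-- The weight of the upright path with jump times `t` in the environment `f`. -/
def pathWeight (n : ℕ) (f : Fin n → ℝ → ℝ) (t : Fin (n + 1) → ℝ) : ℝ :=
  ∑ i : Fin n, (f i (t i.castSucc) - f i (t i.succ))

/-- The last passage value from `(y, n)` to `(x, 1)` in the environment `f`. -/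
noncomputable def lpp (n : ℕ) (f : Fin n → ℝ → ℝ) (y x : ℝ) : ℝ :=
  sSup {w : ℝ | ∃ t : Fin (n + 1) → ℝ, IsJumpTimes n y x t ∧ pathWeight n f t = w}

/-- The height function over the environment `f` with initial data `h₀` on `[0, Y]`:
`H(x) = sup_{0 ≤ y ≤ min(Y, x)} (h₀(y) + f[(y,n) → (x,1)])`. -/
noncomputable def heightFn (n : ℕ) (f : Fin n → ℝ → ℝ) (Y : ℝ) (h₀ : ℝ → ℝ)
    (x : ℝ) : ℝ :=
  sSup {w : ℝ | ∃ y : ℝ, 0 ≤ y ∧ y ≤ min Y x ∧ w = h₀ y + lpp n f y x}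

namespace HMD

lemma jump_antitone {n : ℕ} {y x : ℝ} {T : Fin (n+1) → ℝ} (h : IsJumpTimes n y x T) :
    Antitone T := Fin.antitone_iff_succ_le.mpr h.2.2

lemma jump_mem_Icc {n : ℕ} {y x : ℝ} {T : Fin (n+1) → ℝ} (h : IsJumpTimes n y x T)
    (i : Fin (n+1)) : T i ∈ Icc y x :=
  ⟨h.1 ▸ jump_antitone h (Fin.le_last i), h.2.1 ▸ jump_antitone h (Fin.zero_le i)⟩

lemma exists_jump (n : ℕ) {y x : ℝ} (hyx : y ≤ x) :
    ∃ T : Fin (n+2) → ℝ, IsJumpTimes (n+1) y x T := by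
  refine ⟨fun i => if i = 0 then x else y, ?_, ?_, ?_⟩
  · have : (Fin.last (n+1) : Fin (n+2)) ≠ 0 := by simp [Fin.ext_iff, Fin.last]
    simp [this]
  · simp
  · intro i
    simp only [if_neg (Fin.succ_ne_zero i)]
    by_cases h : i.castSucc = 0
    · simp [h]; exact hyx
    · simp [h]

lemma pathWeight_bound (n : ℕ) (f : Fin n → ℝ → ℝ) (hf : ∀ i, ContinuousOn (f i) (Ici 0))
    {x : ℝ} (_hx : 0 ≤ x) :
    ∃ C : ℝ, ∀ y x' : ℝ, 0 ≤ y → x' ≤ x → ∀ T : Fin (n+1) → ℝ, IsJumpTimes n y x' T →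
      pathWeight n f T ≤ C := by
  have h : ∀ i : Fin n, ∃ M : ℝ, ∀ z ∈ Icc (0:ℝ) x, ‖f i z‖ ≤ M := fun i =>
    isCompact_Icc.exists_bound_of_continuousOn ((hf i).mono Icc_subset_Ici_self)
  choose M hM using h
  refine ⟨∑ i, 2 * M i, fun y x' hy hx' T hT => ?_⟩
  have hmem : ∀ j, T j ∈ Icc (0:ℝ) x := fun j =>
    ⟨le_trans hy (jump_mem_Icc hT j).1, le_trans (jump_mem_Icc hT j).2 hx'⟩
  refine Finset.sum_le_sum fun i _ => ?_
  have h1 := hM i _ (hmem i.castSucc)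
  have h2 := hM i _ (hmem i.succ)
  rw [Real.norm_eq_abs] at h1 h2
  have a1 := abs_le.mp h1
  have a2 := abs_le.mp h2
  linarith [a1.1, a1.2, a2.1, a2.2]

lemma glue_isJump {m : ℕ} {y u x : ℝ} (hux : u ≤ x) {T' : Fin (m+2) → ℝ}
    (hT' : IsJumpTimes (m+1) y u T') :
    IsJumpTimes (m+2) y x (Fin.cases x T') := by
  obtain ⟨h1, h2, h3⟩ := hT'
  refine ⟨?_, ?_, ?_⟩
  · show (Fin.cases x T' : Fin (m+3) → ℝ) (Fin.last (m+2)) = y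
    rw [show (Fin.last (m+2)) = (Fin.last (m+1)).succ from (Fin.succ_last (m+1)).symm]
    exact h1
  · simp
  · intro i
    induction i using Fin.cases with
    | zero =>
      show T' 0 ≤ x
      rw [h2]; exact hux
    | succ j =>
      show T' j.succ ≤ T' j.castSucc
      exact h3 j

lemma glue_weight {m : ℕ} (f : Fin (m+2) → ℝ → ℝ) (x : ℝ) (T' : Fin (m+2) → ℝ) :
    pathWeight (m+2) f (Fin.cases x T')
      = (f 0 x - f 0 (T' 0)) + pathWeight (m+1) (fun j => f j.succ) T' := by
  unfold pathWeight
  rw [Fin.sum_univ_succ]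
  congr 1

lemma split_isJump {m : ℕ} {y x : ℝ} {T : Fin (m+3) → ℝ} (hT : IsJumpTimes (m+2) y x T) :
    IsJumpTimes (m+1) y (T 1) (T ∘ Fin.succ) := by
  obtain ⟨h1, h2, h3⟩ := hT
  refine ⟨?_, ?_, fun j => ?_⟩
  · show T (Fin.last (m+1)).succ = y
    rw [Fin.succ_last]; exact h1
  · rfl
  · show T (j.succ).succ ≤ T ((j.castSucc).succ)
    rw [Fin.succ_castSucc]
    exact h3 j.succ

lemma split_weight {m : ℕ} (f : Fin (m+2) → ℝ → ℝ) (T : Fin (m+3) → ℝ) :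
    pathWeight (m+2) f T
      = (f 0 (T 0) - f 0 (T 1)) + pathWeight (m+1) (fun j => f j.succ) (T ∘ Fin.succ) := by
  unfold pathWeight
  rw [Fin.sum_univ_succ]
  congr 1

end HMD

open HMD in
/-- The deterministic decomposition (e.h^n markov) from the proof of Lemma 5.12: for an
environment `f` on `m + 2 ≥ 2` lines and bounded-above initial data `h₀` on `[0, Y]`,
the height function satisfies, for `t ≥ 0` and `s > 0`,
`H(t+s) = max( H(t) + f₁(t+s) - f₁(t) ,
  sup_{t < u ≤ t+s} sup_{0 ≤ y ≤ min(Y,u)} ( h₀(y) + f[(y,n)→(u,2)] + f₁(t+s) - f₁(u) ) )`,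
where `f[(y,n)→(u,2)]` is the last passage value using only lines `2, …, n`. -/
theorem height_markov_decomposition (m : ℕ) (f : Fin (m + 2) → ℝ → ℝ)
    (hf : ∀ i, ContinuousOn (f i) (Ici 0))
    (Y : ℝ) (hY : 0 ≤ Y)
    (h₀ : ℝ → ℝ) (hh₀ : ∃ B : ℝ, ∀ y ∈ Icc 0 Y, h₀ y ≤ B)
    (t s : ℝ) (ht : 0 ≤ t) (hs : 0 < s) :
    heightFn (m + 2) f Y h₀ (t + s)
      = max (heightFn (m + 2) f Y h₀ t + f 0 (t + s) - f 0 t)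
          (sSup {w : ℝ | ∃ u : ℝ, t < u ∧ u ≤ t + s ∧
            ∃ y : ℝ, 0 ≤ y ∧ y ≤ min Y u ∧
              w = h₀ y + lpp (m + 1) (fun j : Fin (m + 1) => f j.succ) y u
                + f 0 (t + s) - f 0 u}) := by
  obtain ⟨B, hB⟩ := hh₀
  set x := t + s with hxdef
  have hx0 : (0:ℝ) ≤ x := by positivity
  have htx : t ≤ x := by simp [hxdef]; linarith
  set f' : Fin (m+1) → ℝ → ℝ := fun j => f j.succ with hf'def
  obtain ⟨C, hC⟩ := pathWeight_bound (m+2) f hf hx0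
  obtain ⟨C', hC'⟩ := pathWeight_bound (m+1) f' (fun j => hf j.succ) hx0
  obtain ⟨M0, hM0⟩ : ∃ M : ℝ, ∀ z ∈ Icc (0:ℝ) x, ‖f 0 z‖ ≤ M :=
    isCompact_Icc.exists_bound_of_continuousOn ((hf 0).mono Icc_subset_Ici_self)
  -- path sets
  set P : ℝ → ℝ → Set ℝ := fun y x' =>
    {w : ℝ | ∃ T : Fin (m+3) → ℝ, IsJumpTimes (m+2) y x' T ∧ pathWeight (m+2) f T = w}
    with hPdef
  set P' : ℝ → ℝ → Set ℝ := fun y u =>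
    {w : ℝ | ∃ T : Fin (m+2) → ℝ, IsJumpTimes (m+1) y u T ∧ pathWeight (m+1) f' T = w}
    with hP'def
  have hlpp : ∀ y x', lpp (m+2) f y x' = sSup (P y x') := fun _ _ => rfl
  have hlpp' : ∀ y u, lpp (m+1) f' y u = sSup (P' y u) := fun _ _ => rfl
  have hPne : ∀ y x', y ≤ x' → (P y x').Nonempty := by
    intro y x' h
    obtain ⟨T, hT⟩ := exists_jump (m+1) h
    exact ⟨_, T, hT, rfl⟩
  have hP'ne : ∀ y u, y ≤ u → (P' y u).Nonempty := by
    intro y u h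
    obtain ⟨T, hT⟩ := exists_jump m h
    exact ⟨_, T, hT, rfl⟩
  have hPbdd : ∀ y x', 0 ≤ y → x' ≤ x → P y x' ⊆ Iic C := by
    rintro y x' hy hx' w ⟨T, hT, rfl⟩
    exact hC y x' hy hx' T hT
  have hP'bdd : ∀ y u, 0 ≤ y → u ≤ x → P' y u ⊆ Iic C' := by
    rintro y u hy hu w ⟨T, hT, rfl⟩
    exact hC' y u hy hu T hT
  have lpp_le : ∀ y x', 0 ≤ y → y ≤ x' → x' ≤ x → lpp (m+2) f y x' ≤ C := by
    intro y x' hy h1 h2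
    rw [hlpp]
    exact csSup_le (hPne y x' h1) fun w hw => hPbdd y x' hy h2 hw
  have lpp'_le : ∀ y u, 0 ≤ y → y ≤ u → u ≤ x → lpp (m+1) f' y u ≤ C' := by
    intro y u hy h1 h2
    rw [hlpp']
    exact csSup_le (hP'ne y u h1) fun w hw => hP'bdd y u hy h2 hw
  -- height sets
  set S : ℝ → Set ℝ := fun x' =>
    {w : ℝ | ∃ y : ℝ, 0 ≤ y ∧ y ≤ min Y x' ∧ w = h₀ y + lpp (m+2) f y x'} with hSdef
  have hH : ∀ x', heightFn (m+2) f Y h₀ x' = sSup (S x') := fun _ => rfl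
  have hSne : ∀ x', 0 ≤ x' → (S x').Nonempty := fun x' hx' =>
    ⟨h₀ 0 + lpp (m+2) f 0 x', 0, le_rfl, le_min hY hx', rfl⟩
  have hSbdd : ∀ x', 0 ≤ x' → x' ≤ x → S x' ⊆ Iic (B + C) := by
    rintro x' h0 h1 w ⟨y, hy0, hyle, rfl⟩
    have hyY : y ≤ Y := le_trans hyle (min_le_left _ _)
    have hyx' : y ≤ x' := le_trans hyle (min_le_right _ _)
    have := lpp_le y x' hy0 hyx' h1
    have := hB y ⟨hy0, hyY⟩
    simp only [mem_Iic]; linarith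
  -- the set R
  set R : Set ℝ := {w : ℝ | ∃ u : ℝ, t < u ∧ u ≤ x ∧
      ∃ y : ℝ, 0 ≤ y ∧ y ≤ min Y u ∧
        w = h₀ y + lpp (m+1) f' y u + f 0 x - f 0 u} with hRdef
  have hRne : R.Nonempty := by
    refine ⟨h₀ 0 + lpp (m+1) f' 0 x + f 0 x - f 0 x, x, ?_, le_rfl, 0, le_rfl,
      le_min hY hx0, rfl⟩
    simp [hxdef]; linarith
  have hRbdd : BddAbove R := by
    refine ⟨B + C' + M0 + M0, ?_⟩
    rintro w ⟨u, htu, hux, y, hy0, hyle, rfl⟩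
    have hyY : y ≤ Y := le_trans hyle (min_le_left _ _)
    have hyu : y ≤ u := le_trans hyle (min_le_right _ _)
    have h1 := lpp'_le y u hy0 hyu hux
    have h2 := hB y ⟨hy0, hyY⟩
    have h3 := hM0 x ⟨hx0, le_rfl⟩
    have h4 := hM0 u ⟨le_trans hy0 hyu, hux⟩
    rw [Real.norm_eq_abs] at h3 h4
    have a3 := abs_le.mp h3
    have a4 := abs_le.mp h4
    linarith [a3.1, a3.2, a4.1, a4.2]
  -- generic upper bound for full paths to top endpoint x', by splitting
  apply le_antisymm
  · -- LHS ≤ max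
    rw [hH]
    refine csSup_le (hSne x hx0) ?_
    rintro w ⟨y, hy0, hyle, rfl⟩
    have hyx : y ≤ x := le_trans hyle (min_le_right _ _)
    have hyY : y ≤ Y := le_trans hyle (min_le_left _ _)
    rw [hlpp]
    have : sSup (P y x) ≤
        max (heightFn (m + 2) f Y h₀ t + f 0 x - f 0 t) (sSup R) - h₀ y := by
      refine csSup_le (hPne y x hyx) ?_
      rintro w ⟨T, hT, rfl⟩
      set u := T 1 with hudef
      have hyu : y ≤ u := by
        have := (jump_mem_Icc hT 1).1
        exact this
      have hux : u ≤ x := (jump_mem_Icc hT 1).2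
      have hT' : IsJumpTimes (m+1) y u (T ∘ Fin.succ) := split_isJump hT
      have hw : pathWeight (m+2) f T
          = (f 0 x - f 0 u) + pathWeight (m+1) f' (T ∘ Fin.succ) := by
        rw [split_weight f T, hT.2.1]
      have hple : pathWeight (m+1) f' (T ∘ Fin.succ) ≤ lpp (m+1) f' y u := by
        rw [hlpp']
        exact le_csSup ⟨C', fun w hw => hP'bdd y u hy0 hux hw⟩ ⟨_, hT', rfl⟩
      by_cases hut : u ≤ t
      · -- route through H(t)
        have hT2 : IsJumpTimes (m+2) y t (Fin.cases t (T ∘ Fin.succ)) :=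
          glue_isJump hut hT'
        have hw2 : pathWeight (m+2) f (Fin.cases t (T ∘ Fin.succ))
            = (f 0 t - f 0 u) + pathWeight (m+1) f' (T ∘ Fin.succ) := by
          rw [glue_weight f t (T ∘ Fin.succ)]
          have : (T ∘ Fin.succ) 0 = u := hT'.2.1
          rw [this]
        have hle1 : pathWeight (m+2) f (Fin.cases t (T ∘ Fin.succ)) ≤ lpp (m+2) f y t := by
          rw [hlpp]
          exact le_csSup ⟨C, fun w hw => hPbdd y t hy0 htx hw⟩ ⟨_, hT2, rfl⟩
        have hle2 : h₀ y + lpp (m+2) f y t ≤ heightFn (m+2) f Y h₀ t := by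
          rw [hH]
          refine le_csSup ⟨B + C, fun w hw => hSbdd t ht htx hw⟩ ?_
          exact ⟨y, hy0, le_min hyY (le_trans hyu hut), rfl⟩
        have : h₀ y + pathWeight (m+2) f T
            ≤ heightFn (m+2) f Y h₀ t + f 0 x - f 0 t := by
          rw [hw]; linarith
        linarith [le_max_left (heightFn (m + 2) f Y h₀ t + f 0 x - f 0 t) (sSup R)]
      · -- route through R
        push_neg at hut
        have hmem : h₀ y + lpp (m+1) f' y u + f 0 x - f 0 u ∈ R :=
          ⟨u, hut, hux, y, hy0, le_min hyY hyu, rfl⟩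
        have hle : h₀ y + lpp (m+1) f' y u + f 0 x - f 0 u ≤ sSup R :=
          le_csSup hRbdd hmem
        have : h₀ y + pathWeight (m+2) f T
            ≤ h₀ y + lpp (m+1) f' y u + f 0 x - f 0 u := by rw [hw]; linarith
        linarith [le_max_right (heightFn (m + 2) f Y h₀ t + f 0 x - f 0 t) (sSup R)]
    linarith [this]
  · -- max ≤ LHS
    refine max_le ?_ ?_
    · -- H(t) + f₀ x - f₀ t ≤ H(x)
      rw [hH t, hH x]
      have key : sSup (S t) ≤ sSup (S x) - (f 0 x - f 0 t) := by
        refine csSup_le (hSne t ht) ?_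
        rintro w ⟨y, hy0, hyle, rfl⟩
        have hyY : y ≤ Y := le_trans hyle (min_le_left _ _)
        have hyt : y ≤ t := le_trans hyle (min_le_right _ _)
        have hlpple : lpp (m+2) f y t ≤ lpp (m+2) f y x - (f 0 x - f 0 t) := by
          rw [hlpp y t, hlpp y x]
          refine csSup_le (hPne y t hyt) ?_
          rintro w ⟨T, hT, rfl⟩
          set u := T 1 with hudef
          have hyu : y ≤ u := (jump_mem_Icc hT 1).1
          have hut : u ≤ t := (jump_mem_Icc hT 1).2
          have hT' : IsJumpTimes (m+1) y u (T ∘ Fin.succ) := split_isJump hT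
          have hw : pathWeight (m+2) f T
              = (f 0 t - f 0 u) + pathWeight (m+1) f' (T ∘ Fin.succ) := by
            rw [split_weight f T, hT.2.1]
          have hT2 : IsJumpTimes (m+2) y x (Fin.cases x (T ∘ Fin.succ)) :=
            glue_isJump (le_trans hut htx) hT'
          have hw2 : pathWeight (m+2) f (Fin.cases x (T ∘ Fin.succ))
              = (f 0 x - f 0 u) + pathWeight (m+1) f' (T ∘ Fin.succ) := by
            rw [glue_weight f x (T ∘ Fin.succ)]
            have : (T ∘ Fin.succ) 0 = u := hT'.2.1
            rw [this]
          have hle : pathWeight (m+2) f (Fin.cases x (T ∘ Fin.succ)) ≤ sSup (P y x) :=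
            le_csSup ⟨C, fun w hw => hPbdd y x hy0 le_rfl hw⟩ ⟨_, hT2, rfl⟩
          linarith
        have hmem : h₀ y + lpp (m+2) f y x ∈ S x :=
          ⟨y, hy0, le_min hyY (le_trans hyt htx), rfl⟩
        have := le_csSup ⟨B + C, fun w hw => hSbdd x hx0 le_rfl hw⟩ hmem
        linarith
      linarith
    · -- sSup R ≤ H(x)
      rw [hH x]
      refine csSup_le hRne ?_
      rintro w ⟨u, htu, hux, y, hy0, hyle, rfl⟩
      have hyY : y ≤ Y := le_trans hyle (min_le_left _ _)
      have hyu : y ≤ u := le_trans hyle (min_le_right _ _)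
      have hlpple : lpp (m+1) f' y u ≤ lpp (m+2) f y x - (f 0 x - f 0 u) := by
        rw [hlpp', hlpp]
        refine csSup_le (hP'ne y u hyu) ?_
        rintro w ⟨T', hT', rfl⟩
        have hT2 : IsJumpTimes (m+2) y x (Fin.cases x T') := glue_isJump hux hT'
        have hw2 : pathWeight (m+2) f (Fin.cases x T')
            = (f 0 x - f 0 u) + pathWeight (m+1) f' T' := by
          rw [glue_weight f x T', hT'.2.1]
        have hle : pathWeight (m+2) f (Fin.cases x T') ≤ sSup (P y x) :=
          le_csSup ⟨C, fun w hw => hPbdd y x hy0 le_rfl hw⟩ ⟨_, hT2, rfl⟩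
        linarith
      have hmem : h₀ y + lpp (m+2) f y x ∈ S x :=
        ⟨y, hy0, le_min hyY (le_trans hyu hux), rfl⟩
      have := le_csSup ⟨B + C, fun w hw => hSbdd x hx0 le_rfl hw⟩ hmem
      linarith
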